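/- Fix natural numbers n, r, σ with 2 ≤ σ and 2 ≤ r ≤ n, and let T = { s : Fin n → Fin σ | s has exactly r runs }. If B is a natural number and there exists an injective function from T into the set of bit vectors of length B (functions Fin B → Bool), then B ≥ r·log₂(n(σ−1)/r) − log₂(n/r) − 2, where the inequality is over the real numbers. -/

import Mathlib

open Finset Nat in
lemma pow_le_choose_mul_pow (m k : ℕ) (hk : k ≤ m) : m ^ k ≤ m.choose k * k ^ k := by
  rcases Nat.eq_zero_or_pos k with hk0 | hk0
  · simp [hk0]
  have hfac : k.factorial = ∏ j ∈ range k, (k - j) := by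
    rw [← Finset.prod_range_add_one_eq_factorial, ← Finset.prod_range_reflect]
    refine Finset.prod_congr rfl fun j hj => ?_
    have := Finset.mem_range.1 hj; omega
  have key : m ^ k * k.factorial ≤ m.descFactorial k * k ^ k := by
    have hm : m ^ k = ∏ _j ∈ range k, m := by simp
    have hkk : k ^ k = ∏ _j ∈ range k, k := by simp
    rw [hfac, Nat.descFactorial_eq_prod_range, hm, hkk, ← Finset.prod_mul_distrib,
      ← Finset.prod_mul_distrib]
    refine Finset.prod_le_prod' fun j hj => ?_
    have hjk : j < k := Finset.mem_range.1 hj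
    have hjm : j ≤ m := le_of_lt (lt_of_lt_of_le hjk hk)
    have e1 : m * (k - j) + m * j = m * k := by
      rw [← Nat.mul_add, Nat.sub_add_cancel (le_of_lt hjk)]
    have e2 : (m - j) * k + j * k = m * k := by
      rw [← Nat.add_mul, Nat.sub_add_cancel hjm]
    have e3 : j * k ≤ m * j := by
      rw [Nat.mul_comm j k]; exact Nat.mul_le_mul_right j hk
    linarith
  rw [Nat.descFactorial_eq_factorial_mul_choose] at key
  have : k.factorial * m ^ k ≤ k.factorial * (m.choose k * k ^ k) := by
    calc k.factorial * m ^ k = m ^ k * k.factorial := Nat.mul_comm _ _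
    _ ≤ k.factorial * m.choose k * k ^ k := key
    _ = k.factorial * (m.choose k * k ^ k) := by ring
  exact Nat.le_of_mul_le_mul_left this k.factorial_pos

def runAux (n σ : ℕ) (w : Fin (n-1) → ℕ) (a0 : Fin σ) : Fin n → ZMod σ :=
  fun i => (a0.val : ZMod σ) +
    ∑ d ∈ Finset.univ.filter (fun d : Fin (n-1) => d.val < i.val), (w d : ZMod σ)

lemma runAux_succ (n σ : ℕ) (w : Fin (n-1) → ℕ) (a0 : Fin σ) (i : Fin (n-1))
    (h1 : i.val < n) (h2 : i.val + 1 < n) :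
    runAux n σ w a0 ⟨i.val+1, h2⟩ = runAux n σ w a0 ⟨i.val, h1⟩ + (w i : ZMod σ) := by
  unfold runAux
  have hins : Finset.univ.filter (fun d : Fin (n-1) => d.val < i.val + 1)
      = insert i (Finset.univ.filter (fun d : Fin (n-1) => d.val < i.val)) := by
    ext d
    simp only [Finset.mem_filter, Finset.mem_univ, true_and, Finset.mem_insert, Fin.ext_iff]
    omega
  rw [hins, Finset.sum_insert (by simp)]
  ring

lemma runAux_zero (n σ : ℕ) (w : Fin (n-1) → ℕ) (a0 : Fin σ) (h : 0 < n) :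
    runAux n σ w a0 ⟨0, h⟩ = (a0.val : ZMod σ) := by
  unfold runAux
  have : Finset.univ.filter (fun d : Fin (n-1) => d.val < 0) = ∅ := by
    ext d; simp
  rw [this]; simp

def runStr (n σ : ℕ) [NeZero σ] (w : Fin (n-1) → ℕ) (a0 : Fin σ) : Fin n → Fin σ :=
  fun i => ⟨(runAux n σ w a0 i).val, ZMod.val_lt _⟩

lemma card_runs_ge (n r σ : ℕ) (hσ : 2 ≤ σ) (hr : 2 ≤ r) (hrn : r ≤ n) :
    σ * ((n-1).choose (r-1) * (σ-1)^(r-1)) ≤ Fintype.card {s : Fin n → Fin σ //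
        (Finset.univ.filter (fun i : Fin (n - 1) =>
          s ⟨i.val, by have := i.isLt; omega⟩ ≠ s ⟨i.val + 1, by have := i.isLt; omega⟩)).card = r - 1} := by
  haveI : NeZero σ := ⟨by omega⟩
  have hn : 2 ≤ n := le_trans hr hrn
  -- the weight function associated to a break set and increments
  set wf : (D : Finset (Fin (n-1))) → (↥D → Fin (σ-1)) → Fin (n-1) → ℕ :=
    fun D e d => if h : d ∈ D then (e ⟨d, h⟩).val + 1 else 0 with hwf
  have hwlt : ∀ D e d, wf D e d < σ := by
    intro D e d
    simp only [hwf]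
    split
    · have := (e ⟨d, ‹_›⟩).isLt; omega
    · omega
  have hwmem : ∀ D e d, wf D e d ≠ 0 ↔ d ∈ D := by
    intro D e d
    simp only [hwf]
    split <;> simp [*]
  -- break characterization
  have hbreak : ∀ (w : Fin (n-1) → ℕ), (∀ d, w d < σ) → ∀ (a0 : Fin σ) (i : Fin (n-1)),
      (runStr n σ w a0 ⟨i.val, by omega⟩ ≠ runStr n σ w a0 ⟨i.val + 1, by omega⟩ ↔ w i ≠ 0) := by
    intro w hw a0 i
    have h2 : i.val + 1 < n := by omega
    have h1 : i.val < n := by omega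
    rw [not_iff_not]
    unfold runStr
    rw [Fin.ext_iff]
    simp only
    constructor
    · intro h
      have hz : runAux n σ w a0 ⟨i.val, h1⟩ = runAux n σ w a0 ⟨i.val+1, h2⟩ :=
        ZMod.val_injective σ h
      rw [runAux_succ n σ w a0 i h1 h2] at hz
      have : (w i : ZMod σ) = 0 := by
        have := (add_eq_left (a := runAux n σ w a0 ⟨i.val, h1⟩)
          (b := (w i : ZMod σ))).1 hz.symm
        exact this
      have hv : (w i : ZMod σ).val = w i := ZMod.val_natCast_of_lt (hw i)
      rw [this] at hv
      simpa using hv.symm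
    · intro h
      rw [runAux_succ n σ w a0 i h1 h2, h]
      simp
  -- the injection
  set F : Fin σ × (Σ D : {D : Finset (Fin (n-1)) // D.card = r - 1}, (↥(D.1) → Fin (σ-1))) →
      {s : Fin n → Fin σ //
        (Finset.univ.filter (fun i : Fin (n - 1) =>
          s ⟨i.val, by omega⟩ ≠ s ⟨i.val + 1, by omega⟩)).card = r - 1} :=
    fun x => ⟨runStr n σ (wf x.2.1.1 x.2.2) x.1, by
      have hfe : Finset.univ.filter (fun i : Fin (n - 1) =>
          runStr n σ (wf x.2.1.1 x.2.2) x.1 ⟨i.val, by omega⟩ ≠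
            runStr n σ (wf x.2.1.1 x.2.2) x.1 ⟨i.val + 1, by omega⟩) = x.2.1.1 := by
        ext i
        simp only [Finset.mem_filter, Finset.mem_univ, true_and]
        rw [hbreak _ (hwlt x.2.1.1 x.2.2) x.1 i, hwmem]
      rw [hfe]; exact x.2.1.2⟩ with hF
  have hFinj : Function.Injective F := by
    intro x y hxy
    obtain ⟨a0, ⟨D, e⟩⟩ := x
    obtain ⟨a0', ⟨D', e'⟩⟩ := y
    have hs : runStr n σ (wf D.1 e) a0 = runStr n σ (wf D'.1 e') a0' := by
      simpa [hF] using congrArg Subtype.val hxy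
    have hg : runAux n σ (wf D.1 e) a0 = runAux n σ (wf D'.1 e') a0' := by
      funext i
      apply ZMod.val_injective σ
      have := congrFun hs i
      simpa [runStr, Fin.ext_iff] using this
    -- weights are equal
    have hw : wf D.1 e = wf D'.1 e' := by
      funext d
      have h1 : d.val < n := by omega
      have h2 : d.val + 1 < n := by omega
      have e1 := runAux_succ n σ (wf D.1 e) a0 d h1 h2
      have e2 := runAux_succ n σ (wf D'.1 e') a0' d h1 h2
      rw [hg] at e1
      have hc : ((wf D.1 e d : ℕ) : ZMod σ) = ((wf D'.1 e' d : ℕ) : ZMod σ) := by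
        have := e1.symm.trans e2
        exact add_left_cancel this
      have v1 : ((wf D.1 e d : ℕ) : ZMod σ).val = wf D.1 e d :=
        ZMod.val_natCast_of_lt (hwlt D.1 e d)
      have v2 : ((wf D'.1 e' d : ℕ) : ZMod σ).val = wf D'.1 e' d :=
        ZMod.val_natCast_of_lt (hwlt D'.1 e' d)
      rw [← v1, ← v2, hc]
    -- D = D'
    have hD : D = D' := by
      apply Subtype.ext
      ext d
      rw [← hwmem D.1 e d, ← hwmem D'.1 e' d, hw]
    subst hD
    -- e = e'
    have he : e = e' := by
      funext d
      have := congrFun hw d.1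
      simp only [hwf, d.2, dif_pos, Subtype.coe_eta] at this
      exact Fin.ext (by omega)
    subst he
    -- a0 = a0'
    have ha : a0 = a0' := by
      have h0 : (0 : ℕ) < n := by omega
      have := congrFun hg ⟨0, h0⟩
      rw [runAux_zero n σ _ a0 h0, runAux_zero n σ _ a0' h0] at this
      have v1 : ((a0.val : ℕ) : ZMod σ).val = a0.val := ZMod.val_natCast_of_lt a0.isLt
      have v2 : ((a0'.val : ℕ) : ZMod σ).val = a0'.val := ZMod.val_natCast_of_lt a0'.isLt
      exact Fin.ext (by rw [← v1, ← v2, this])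
    subst ha
    rfl
  have hcard := Fintype.card_le_of_injective F hFinj
  calc σ * ((n-1).choose (r-1) * (σ-1)^(r-1))
      = Fintype.card (Fin σ ×
        (Σ D : {D : Finset (Fin (n-1)) // D.card = r - 1}, (↥(D.1) → Fin (σ-1)))) := by
        rw [Fintype.card_prod, Fintype.card_sigma]
        simp only [Fintype.card_fun, Fintype.card_fin, Fintype.card_coe]
        rw [Finset.sum_congr rfl (fun D _ => by rw [D.2])]
        rw [Finset.sum_const, smul_eq_mul]
        rw [Finset.card_univ, Fintype.card_finset_len]
        simp
    _ ≤ _ := hcard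

/-- For `2 ≤ σ` and `2 ≤ r ≤ n`: if there is an injective encoding of the set
of strings of length `n` over `{0, …, σ-1}` with exactly `r` runs into bit
vectors of length `B`, then `B ≥ r·log₂(n(σ-1)/r) − log₂(n/r) − 2`. -/
theorem bits_lower_bound (n r σ B : ℕ) (hσ : 2 ≤ σ) (hr : 2 ≤ r) (hrn : r ≤ n)
    (henc : ∃ f : {s : Fin n → Fin σ //
        (Finset.univ.filter (fun i : Fin (n - 1) =>
          s ⟨i.val, by omega⟩ ≠ s ⟨i.val + 1, by omega⟩)).card = r - 1} →
        (Fin B → Bool), Function.Injective f) :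
    (B : ℝ) ≥ (r : ℝ) * Real.logb 2 ((n : ℝ) * ((σ : ℝ) - 1) / (r : ℝ)) -
      Real.logb 2 ((n : ℝ) / (r : ℝ)) - 2 := by
  obtain ⟨f, hf⟩ := henc
  have hn : 2 ≤ n := le_trans hr hrn
  have hcT : Fintype.card {s : Fin n → Fin σ //
        (Finset.univ.filter (fun i : Fin (n - 1) =>
          s ⟨i.val, by omega⟩ ≠ s ⟨i.val + 1, by omega⟩)).card = r - 1} ≤ 2 ^ B := by
    have := Fintype.card_le_of_injective f hf
    simpa using this
  have hN : σ * ((n-1).choose (r-1) * (σ-1)^(r-1)) ≤ 2 ^ B :=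
    le_trans (card_runs_ge n r σ hσ hr hrn) hcT
  clear hcT hf f
  -- clean up natural subtraction
  obtain ⟨k, rfl⟩ : ∃ k, r = k + 1 := ⟨r - 1, by omega⟩
  obtain ⟨t, rfl⟩ : ∃ t, σ = t + 1 := ⟨σ - 1, by omega⟩
  simp only [Nat.add_sub_cancel] at hN
  have ht1 : 1 ≤ t := by omega
  have hk1 : 1 ≤ k := by omega
  set C := (n-1).choose k with hC
  -- n^k ≤ C * (k+1)^k
  have hchoose : n ^ k ≤ C * (k+1) ^ k := by
    have h1 : (n-1) ^ k ≤ C * k ^ k := pow_le_choose_mul_pow (n-1) k (by omega)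
    have hmul : n * k ≤ (n-1) * (k+1) := by
      have e1 : (n-1) * (k+1) + (k+1) = n * (k+1) := by
        have h : n - 1 + 1 = n := by omega
        calc (n-1)*(k+1) + (k+1) = ((n-1)+1) * (k+1) := by ring
          _ = n * (k+1) := by rw [h]
      have e2 : n * k + n = n * (k+1) := by ring
      have : k + 1 ≤ n := hrn
      linarith
    have h2 : (n * k) ^ k ≤ ((n-1) * (k+1)) ^ k := Nat.pow_le_pow_left hmul k
    rw [mul_pow, mul_pow] at h2
    have h3 : n ^ k * k ^ k ≤ C * k ^ k * (k+1) ^ k := by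
      calc n ^ k * k ^ k ≤ (n-1) ^ k * (k+1) ^ k := h2
        _ ≤ C * k ^ k * (k+1) ^ k := Nat.mul_le_mul_right _ h1
    have hkpos : 0 < k ^ k := pow_pos (by omega : 0 < k) k
    have h4 : k ^ k * n ^ k ≤ k ^ k * (C * (k+1) ^ k) := by
      calc k ^ k * n ^ k = n ^ k * k ^ k := Nat.mul_comm _ _
        _ ≤ C * k ^ k * (k+1) ^ k := h3
        _ = k ^ k * (C * (k+1) ^ k) := by ring
    exact Nat.le_of_mul_le_mul_left h4 hkpos
  -- key natural inequality
  have hkey : n ^ k * t ^ (k+1) ≤ 2 ^ B * (k+1) ^ k := by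
    calc n ^ k * t ^ (k+1) = n ^ k * t ^ k * t := by ring
      _ ≤ C * (k+1) ^ k * t ^ k * t := by
          exact Nat.mul_le_mul_right _ (Nat.mul_le_mul_right _ hchoose)
      _ = (k+1) ^ k * (t * (C * t ^ k)) := by ring
      _ ≤ (k+1) ^ k * ((t+1) * (C * t ^ k)) := by
          exact Nat.mul_le_mul_left _ (Nat.mul_le_mul_right _ (by omega))
      _ ≤ (k+1) ^ k * 2 ^ B := Nat.mul_le_mul_left _ hN
      _ = 2 ^ B * (k+1) ^ k := Nat.mul_comm _ _
  -- cast to reals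
  have hkeyR : (n:ℝ) ^ k * ((t:ℝ)) ^ (k+1) ≤ 2 ^ B * ((k:ℝ)+1) ^ k := by
    exact_mod_cast hkey
  have hnR : (2:ℝ) ≤ (n:ℝ) := by exact_mod_cast hn
  have htR : (1:ℝ) ≤ (t:ℝ) := by exact_mod_cast ht1
  have hcast1 : ((t:ℝ)+1) - 1 = (t:ℝ) := by ring
  set x : ℝ := (n : ℝ) * (((t:ℝ)+1) - 1) / ((k:ℝ)+1) with hx
  set y : ℝ := (n : ℝ) / ((k:ℝ)+1) with hy
  have hkpos : (0:ℝ) < (k:ℝ) + 1 := by positivity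
  have hxpos : 0 < x := by
    rw [hx, hcast1]
    have : (0:ℝ) < (n:ℝ) * (t:ℝ) := by nlinarith
    positivity
  have hypos : 0 < y := by rw [hy]; positivity
  -- x^(k+1) ≤ 2^B * y
  have hmain : x ^ (k+1) ≤ 2 ^ B * y := by
    rw [hx, hy, hcast1, div_pow, div_le_iff₀ (by positivity), mul_pow]
    have e1 : ((k:ℝ)+1) ^ (k+1) = ((k:ℝ)+1) ^ k * ((k:ℝ)+1) := by ring
    have e2 : (n:ℝ) ^ (k+1) = (n:ℝ) ^ k * (n:ℝ) := by ring
    rw [e1, e2]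
    have h5 : (n:ℝ) ^ k * (t:ℝ) ^ (k+1) * ((n:ℝ) * ((k:ℝ)+1)) ≤
        (2:ℝ) ^ B * ((k:ℝ)+1) ^ k * ((n:ℝ) * ((k:ℝ)+1)) := by
      apply mul_le_mul_of_nonneg_right hkeyR
      positivity
    calc (n:ℝ) ^ k * (n:ℝ) * (t:ℝ) ^ (k+1)
        = (n:ℝ) ^ k * (t:ℝ) ^ (k+1) * (n:ℝ) := by ring
      _ ≤ (2:ℝ) ^ B * ((k:ℝ)+1) ^ k * (n:ℝ) := by
          nlinarith [pow_pos (by linarith : (0:ℝ) < (t:ℝ)) (k+1),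
            pow_pos hkpos k, pow_pos (by norm_num : (0:ℝ) < 2) B]
      _ = 2 ^ B * ((n:ℝ) / ((k:ℝ)+1)) * (((k:ℝ)+1) ^ k * ((k:ℝ)+1)) := by
          field_simp
  -- take logs
  have hlog : Real.logb 2 (x ^ (k+1)) ≤ Real.logb 2 (2 ^ B * y) :=
    Real.logb_le_logb_of_le (by norm_num) (pow_pos hxpos _) hmain
  rw [Real.logb_pow, Real.logb_mul (by positivity) (ne_of_gt hypos),
    Real.logb_pow, Real.logb_self_eq_one (by norm_num)] at hlog
  have hcast2 : ((k:ℝ)+1) = ((k+1 : ℕ) : ℝ) := by push_cast; ring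
  rw [ge_iff_le]
  push_cast
  have hxx : (n : ℝ) * ((t:ℝ) + 1 - 1) / ((k:ℝ)+1) = x := by rw [hx]
  have hyy : (n : ℝ) / ((k:ℝ)+1) = y := by rw [hy]
  push_cast at hlog
  linarith
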